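/- Let (V,E) be a finite simple graph and S ⊆ V. The set of pairs (X,Y) with X ∪ Y = S, X ∩ Y = ∅, X a clique and Y a coclique is in bijection with P_S := { X ⊆ S | X is a clique and S \ X is a coclique }; consequently the number of such disjoint pairs is at most |S| + 1. -/

import Mathlib

theorem key_family' {V : Type} [DecidableEq V] {S : Finset V} {F : Finset (Finset V)}
    (hS : ∀ B ∈ F, B ⊆ S)
    (hp : ∀ A ∈ F, ∀ B ∈ F, (A \ B).card ≤ 1) :
    F.card ≤ S.card + 1 := by
  rcases F.eq_empty_or_nonempty with rfl | hne
  · simp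
  obtain ⟨A, hA, hmin⟩ := F.exists_min_image Finset.card hne
  -- the injection B ↦ (A \ B, B \ A)
  have hinj : Set.InjOn (fun B => (A \ B, B \ A)) F := by
    intro B hB B' hB' h
    have h1 : A \ B = A \ B' := congrArg Prod.fst h
    have h2 : B \ A = B' \ A := congrArg Prod.snd h
    ext a
    by_cases haA : a ∈ A
    · have e1 : a ∈ A \ B ↔ a ∈ A \ B' := by rw [h1]
      simp only [Finset.mem_sdiff, haA, true_and] at e1
      tauto
    · have e2 : a ∈ B \ A ↔ a ∈ B' \ A := by rw [h2]
      simp only [Finset.mem_sdiff, haA, not_false_iff, and_true] at e2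
      exact e2
  -- if B \ A = ∅ then B = A
  have hminA : ∀ B ∈ F, B \ A = ∅ → B = A := by
    intro B hB h
    exact Finset.eq_of_subset_of_card_le (Finset.sdiff_eq_empty_iff_subset.mp h) (hmin B hB)
  -- cards of differences are ≤ 1, so they are ∅ or a singleton
  have hsh : ∀ B ∈ F, B \ A = ∅ ∨ ∃ x, x ∈ S ∧ x ∉ A ∧ B \ A = {x} := by
    intro B hB
    rcases Finset.eq_empty_or_nonempty (B \ A) with h | h
    · exact Or.inl h
    · right
      obtain ⟨x, hx⟩ := Finset.card_eq_one.mp (le_antisymm (hp B hB A hA) h.card_pos)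
      refine ⟨x, ?_, ?_, hx⟩
      · have : x ∈ B \ A := hx ▸ Finset.mem_singleton_self x
        exact hS B hB (Finset.mem_sdiff.mp this).1
      · have : x ∈ B \ A := hx ▸ Finset.mem_singleton_self x
        exact (Finset.mem_sdiff.mp this).2
  have hshA : ∀ B ∈ F, A \ B = ∅ ∨ ∃ y, y ∈ A ∧ A \ B = {y} := by
    intro B hB
    rcases Finset.eq_empty_or_nonempty (A \ B) with h | h
    · exact Or.inl h
    · right
      obtain ⟨y, hy⟩ := Finset.card_eq_one.mp (le_antisymm (hp A hA B hB) h.card_pos)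
      have : y ∈ A \ B := hy ▸ Finset.mem_singleton_self y
      exact ⟨y, (Finset.mem_sdiff.mp this).1, hy⟩
  -- interaction lemma
  have haux : ∀ B ∈ F, ∀ B' ∈ F, ∀ x x' y', B \ A = {x} → B' \ A = {x'} →
      A \ B' = {y'} → x ≠ x' → y' ∈ A \ B := by
    intro B hB B' hB' x x' y' hBx hB'x hB'y hxx
    by_contra hy
    have hxB : x ∈ B ∧ x ∉ A := by
      have : x ∈ B \ A := hBx ▸ Finset.mem_singleton_self x
      exact ⟨(Finset.mem_sdiff.mp this).1, (Finset.mem_sdiff.mp this).2⟩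
    have hy'A : y' ∈ A ∧ y' ∉ B' := by
      have : y' ∈ A \ B' := hB'y ▸ Finset.mem_singleton_self y'
      exact ⟨(Finset.mem_sdiff.mp this).1, (Finset.mem_sdiff.mp this).2⟩
    have hy'B : y' ∈ B := by
      by_contra h
      exact hy (Finset.mem_sdiff.mpr ⟨hy'A.1, h⟩)
    have hxB' : x ∉ B' := by
      intro h
      have : x ∈ B' \ A := Finset.mem_sdiff.mpr ⟨h, hxB.2⟩
      rw [hB'x, Finset.mem_singleton] at this
      exact hxx this
    have hsub : ({x, y'} : Finset V) ⊆ B \ B' := by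
      intro a ha
      rcases Finset.mem_insert.mp ha with rfl | ha
      · exact Finset.mem_sdiff.mpr ⟨hxB.1, hxB'⟩
      · rw [Finset.mem_singleton] at ha; subst ha
        exact Finset.mem_sdiff.mpr ⟨hy'B, hy'A.2⟩
    have hne' : x ≠ y' := fun h => hxB.2 (h ▸ hy'A.1)
    have h2 : 2 ≤ (B \ B').card := by
      calc 2 = ({x, y'} : Finset V).card := (Finset.card_pair hne').symm
        _ ≤ (B \ B').card := Finset.card_le_card hsub
    have := hp B hB B' hB'
    omega
  by_cases hD : ∀ B ∈ F, A \ B = ∅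
  · -- case 1: all contain A
    have himg : ∀ B ∈ F, (A \ B, B \ A) ∈
        insert ((∅ : Finset V), (∅ : Finset V)) ((S \ A).image fun x => ((∅ : Finset V), {x})) := by
      intro B hB
      rcases hsh B hB with h | ⟨x, hxS, hxA, h⟩
      · rw [hD B hB, h]; exact Finset.mem_insert_self _ _
      · rw [hD B hB, h]
        exact Finset.mem_insert_of_mem (Finset.mem_image.mpr
          ⟨x, Finset.mem_sdiff.mpr ⟨hxS, hxA⟩, rfl⟩)
    calc F.card ≤ _ := Finset.card_le_card_of_injOn _ himg hinj
      _ ≤ ((S \ A).image fun x => ((∅ : Finset V), ({x} : Finset V))).card + 1 := Finset.card_insert_le _ _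
      _ ≤ (S \ A).card + 1 := by gcongr ?_ + 1; exact Finset.card_image_le
      _ ≤ S.card + 1 := by gcongr ?_ + 1; exact Finset.card_le_card Finset.sdiff_subset
  · push_neg at hD
    obtain ⟨B0, hB0, hB0'⟩ := hD
    obtain ⟨y0, hy0A, hy0⟩ := (hshA B0 hB0).resolve_left hB0'.ne_empty
    have hB0A : B0 \ A ≠ ∅ := fun h => hB0'.ne_empty (by rw [hminA B0 hB0 h, Finset.sdiff_self])
    obtain ⟨x0, hx0S, hx0A, hx0⟩ := (hsh B0 hB0).resolve_left hB0A
    by_cases hall : ∀ B ∈ F, B \ A ⊆ {x0}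
    · -- case 2: every set's part outside A is within {x0}
      have hASS : A.card + 1 ≤ S.card := by
        have : A ⊂ S := Finset.ssubset_iff_of_subset (hS A hA) |>.mpr ⟨x0, hx0S, hx0A⟩
        have := Finset.card_lt_card this
        omega
      have himg : ∀ B ∈ F, (A \ B, B \ A) ∈
          insert ((∅ : Finset V), (∅ : Finset V))
            (insert ((∅ : Finset V), ({x0} : Finset V))
              (A.image fun y => (({y} : Finset V), ({x0} : Finset V)))) := by
        intro B hB
        have hBx : B \ A = ∅ ∨ B \ A = {x0} := by
          rcases hsh B hB with h | ⟨x, _, _, h⟩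
          · exact Or.inl h
          · right
            have : x ∈ ({x0} : Finset V) := hall B hB (h ▸ Finset.mem_singleton_self x)
            rw [Finset.mem_singleton] at this
            rw [h, this]
        rcases hBx with h | h
        · rw [hminA B hB h]
          simp
        · rcases hshA B hB with h' | ⟨y, hyA, h'⟩
          · rw [h, h']; exact Finset.mem_insert_of_mem (Finset.mem_insert_self _ _)
          · rw [h, h']
            exact Finset.mem_insert_of_mem (Finset.mem_insert_of_mem
              (Finset.mem_image.mpr ⟨y, hyA, rfl⟩))
      calc F.card ≤ _ := Finset.card_le_card_of_injOn _ himg hinj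
        _ ≤ (insert ((∅ : Finset V), ({x0} : Finset V))
              (A.image fun y => (({y} : Finset V), ({x0} : Finset V)))).card + 1 :=
            Finset.card_insert_le _ _
        _ ≤ ((A.image fun y => (({y} : Finset V), ({x0} : Finset V))).card + 1) + 1 := by
            gcongr ?_ + 1; exact Finset.card_insert_le _ _
        _ ≤ (A.card + 1) + 1 := by gcongr ?_ + 1 + 1; exact Finset.card_image_le
        _ ≤ S.card + 1 := by omega
    · -- case 3: some B1 with B1 \ A = {x1}, x1 ≠ x0
      push_neg at hall
      obtain ⟨B1, hB1, hB1'⟩ := hall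
      have hB1ne : B1 \ A ≠ ∅ := fun h => hB1' (by rw [h]; exact Finset.empty_subset _)
      obtain ⟨x1, hx1S, hx1A, hx1⟩ := (hsh B1 hB1).resolve_left hB1ne
      have hx10 : x1 ≠ x0 := by
        intro h
        exact hB1' (by rw [hx1, h])
      -- every B ∈ F with B ≠ A has A \ B = {y0}
      have hkey : ∀ B ∈ F, B = A ∨ ((A \ B = {y0}) ∧ ∃ x, x ∈ S \ A ∧ B \ A = {x}) := by
        intro B hB
        rcases hsh B hB with h | ⟨x, hxS, hxA, h⟩
        · exact Or.inl (hminA B hB h)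
        · right
          refine ⟨?_, x, Finset.mem_sdiff.mpr ⟨hxS, hxA⟩, h⟩
          have hy0mem : y0 ∈ A \ B := by
            by_cases hx : x = x0
            · have hy0B1 : A \ B1 = {y0} := by
                have := haux B1 hB1 B0 hB0 x1 x0 y0 hx1 hx0 hy0 hx10
                obtain ⟨y1, _, hy1⟩ := (hshA B1 hB1).resolve_left
                  (fun hemp => by rw [hemp] at this; exact absurd this (Finset.notMem_empty _))
                rw [hy1] at this ⊢
                rw [Finset.mem_singleton] at this
                rw [this]
              exact haux B hB B1 hB1 x x1 y0 h hx1 hy0B1 (hx ▸ hx10.symm)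
            · exact haux B hB B0 hB0 x x0 y0 h hx0 hy0 hx
          obtain ⟨y, _, hy⟩ := (hshA B hB).resolve_left
            (fun hemp => by rw [hemp] at hy0mem; exact absurd hy0mem (Finset.notMem_empty _))
          rw [hy] at hy0mem ⊢
          rw [Finset.mem_singleton] at hy0mem
          rw [hy0mem]
      have himg : ∀ B ∈ F, (A \ B, B \ A) ∈
          insert ((∅ : Finset V), (∅ : Finset V))
            ((S \ A).image fun x => (({y0} : Finset V), ({x} : Finset V))) := by
        intro B hB
        rcases hkey B hB with rfl | ⟨h1, x, hx, h2⟩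
        · simp
        · rw [h1, h2]
          exact Finset.mem_insert_of_mem (Finset.mem_image.mpr ⟨x, hx, rfl⟩)
      calc F.card ≤ _ := Finset.card_le_card_of_injOn _ himg hinj
        _ ≤ ((S \ A).image fun x => (({y0} : Finset V), ({x} : Finset V))).card + 1 :=
            Finset.card_insert_le _ _
        _ ≤ (S \ A).card + 1 := by gcongr ?_ + 1; exact Finset.card_image_le
        _ ≤ S.card + 1 := by gcongr ?_ + 1; exact Finset.card_le_card Finset.sdiff_subset


/-- The set of pairs `(X,Y)` with `X ∪ Y = S`, `X ∩ Y = ∅`, `X` a clique and `Y`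
a coclique is in bijection with `P_S = {X ⊆ S | X clique, S \ X coclique}`;
consequently the number of such disjoint pairs is at most `|S| + 1`. -/
theorem disjoint_pairs_equiv_and_card {V : Type} [Fintype V]
    (G : SimpleGraph V) (S : Set V) :
    Nonempty
      (↥{p : Set V × Set V | p.1 ∪ p.2 = S ∧ p.1 ∩ p.2 = ∅ ∧
          G.IsClique p.1 ∧ p.2.Pairwise fun u v => ¬ G.Adj u v} ≃
       ↥{X : Set V | X ⊆ S ∧ G.IsClique X ∧
          (S \ X).Pairwise fun u v => ¬ G.Adj u v}) ∧
    {p : Set V × Set V | p.1 ∪ p.2 = S ∧ p.1 ∩ p.2 = ∅ ∧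
        G.IsClique p.1 ∧ p.2.Pairwise fun u v => ¬ G.Adj u v}.ncard ≤ S.ncard + 1 := by
  classical
  set Q : Set (Set V × Set V) := {p : Set V × Set V | p.1 ∪ p.2 = S ∧ p.1 ∩ p.2 = ∅ ∧
      G.IsClique p.1 ∧ p.2.Pairwise fun u v => ¬ G.Adj u v} with hQ
  set P : Set (Set V) := {X : Set V | X ⊆ S ∧ G.IsClique X ∧
      (S \ X).Pairwise fun u v => ¬ G.Adj u v} with hP
  have hdiff : ∀ p ∈ Q, S \ p.1 = p.2 := by
    intro p hp
    obtain ⟨h1, h2, _, _⟩ := hp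
    ext a
    constructor
    · intro ⟨haS, ha1⟩
      rw [← h1] at haS
      exact haS.resolve_left ha1
    · intro ha2
      refine ⟨h1 ▸ Or.inr ha2, fun ha1 => ?_⟩
      have : a ∈ p.1 ∩ p.2 := ⟨ha1, ha2⟩
      rw [h2] at this
      exact this
  have e : Q ≃ P := by
    refine ⟨fun p => ⟨p.1.1, ?_, ?_, ?_⟩, fun X => ⟨(X.1, S \ X.1), ?_, ?_, ?_, ?_⟩, ?_, ?_⟩
    · have := p.2.1
      exact this ▸ Set.subset_union_left
    · exact p.2.2.2.1
    · rw [hdiff p.1 p.2]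
      exact p.2.2.2.2
    · exact Set.union_diff_cancel X.2.1
    · ext a
      simp only [Set.mem_inter_iff, Set.mem_diff, Set.mem_empty_iff_false, iff_false]
      tauto
    · exact X.2.2.1
    · exact X.2.2.2
    · intro p
      apply Subtype.ext
      show (p.1.1, S \ p.1.1) = p.1
      rw [hdiff p.1 p.2]
    · intro X
      apply Subtype.ext
      rfl
  refine ⟨⟨e⟩, ?_⟩
  have hcard : Q.ncard = P.ncard := by
    rw [← Nat.card_coe_set_eq, ← Nat.card_coe_set_eq]
    exact Nat.card_congr e
  rw [hcard]
  -- now bound P.ncard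
  have hPfin : P.Finite := Set.toFinite P
  have hSfin : S.Finite := Set.toFinite S
  set F : Finset (Finset V) := hPfin.toFinset.image (fun X => (Set.toFinite X).toFinset) with hF
  have hmemF : ∀ X ∈ P, (Set.toFinite X).toFinset ∈ F := by
    intro X hX
    exact Finset.mem_image.mpr ⟨X, hPfin.mem_toFinset.mpr hX, rfl⟩
  have hcardF : P.ncard = F.card := by
    rw [Set.ncard_eq_toFinset_card P hPfin]
    rw [hF]
    rw [Finset.card_image_of_injOn]
    intro X hX Y hY h
    have : (Set.toFinite X).toFinset = (Set.toFinite Y).toFinset := h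
    rwa [Set.Finite.toFinset_inj] at this
  rw [hcardF, Set.ncard_eq_toFinset_card S hSfin]
  apply key_family'
  · intro B hB
    obtain ⟨X, hX, rfl⟩ := Finset.mem_image.mp hB
    rw [Set.Finite.mem_toFinset] at hX
    intro a ha
    rw [Set.Finite.mem_toFinset] at ha
    exact hSfin.mem_toFinset.mpr (hX.1 ha)
  · intro Bf hBf Cf hCf
    obtain ⟨X, hX, rfl⟩ := Finset.mem_image.mp hBf
    obtain ⟨Y, hY, rfl⟩ := Finset.mem_image.mp hCf
    rw [Set.Finite.mem_toFinset] at hX hY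
    rw [Finset.card_le_one]
    intro a ha b hb
    rw [Finset.mem_sdiff, Set.Finite.mem_toFinset, Set.Finite.mem_toFinset] at ha hb
    by_contra hab
    -- a, b ∈ X \ Y : adjacent (X clique) and non-adjacent (S \ Y coclique)
    have hadj : G.Adj a b := hX.2.1 ha.1 hb.1 hab
    have hna : ¬ G.Adj a b :=
      hY.2.2 ⟨hX.1 ha.1, ha.2⟩ ⟨hX.1 hb.1, hb.2⟩ hab
    exact hna hadj
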